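/- Let T₄ : (ℝ⁸)⁴ → ℝ be the 4-linear form T₄(x,y,z,w) = (w₁+w₂)[(z₁+z₂)(x₁y₁+x₁y₂+x₂y₁−x₂y₂) + (z₁−z₂)(x₃y₃+x₃y₄+x₄y₃−x₄y₄)] + (w₁−w₂)[(z₃+z₄)(x₅y₅+x₅y₆+x₆y₅−x₆y₆) + (z₃−z₄)(x₇y₇+x₇y₈+x₈y₇−x₈y₈)], where ℝ⁸ carries the sup norm. Then ‖T₄‖ = 8 and Σ_{i₁=1}^{8} ( Σ_{i₂,i₃,i₄=1}^{8} |T₄(e_{i₁},e_{i₂},e_{i₃},e_{i₄})|² )^{1/2} = 8√8. -/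

import Mathlib

private lemma key_abs (a b c : ℝ) (ha : |a| ≤ c) (hb : |b| ≤ c) :
    |a + b| + |a - b| ≤ 2 * c := by
  obtain ⟨ha1, ha2⟩ := abs_le.mp ha
  obtain ⟨hb1, hb2⟩ := abs_le.mp hb
  rcases abs_cases (a + b) with ⟨h, _⟩ | ⟨h, _⟩ <;>
    rcases abs_cases (a - b) with ⟨h', _⟩ | ⟨h', _⟩ <;> linarith

private lemma comb_abs (c0 c1 A B nc M : ℝ) (hc0 : |c0| ≤ nc) (hc1 : |c1| ≤ nc)
    (hA : |A| ≤ M) (hB : |B| ≤ M) :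
    |(c0 + c1) * A + (c0 - c1) * B| ≤ 2 * nc * M := by
  have hM : 0 ≤ M := le_trans (abs_nonneg _) hA
  have hk := key_abs c0 c1 nc hc0 hc1
  calc |(c0 + c1) * A + (c0 - c1) * B|
      ≤ |(c0 + c1) * A| + |(c0 - c1) * B| := abs_add_le _ _
    _ = |c0 + c1| * |A| + |c0 - c1| * |B| := by rw [abs_mul, abs_mul]
    _ ≤ |c0 + c1| * M + |c0 - c1| * M :=
        add_le_add (mul_le_mul_of_nonneg_left hA (abs_nonneg _))
          (mul_le_mul_of_nonneg_left hB (abs_nonneg _))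
    _ = (|c0 + c1| + |c0 - c1|) * M := by ring
    _ ≤ 2 * nc * M := mul_le_mul_of_nonneg_right hk hM

private lemma quad_abs (x0 x1 y0 y1 nx ny : ℝ) (hx0 : |x0| ≤ nx) (hx1 : |x1| ≤ nx)
    (hy0 : |y0| ≤ ny) (hy1 : |y1| ≤ ny) :
    |x0 * y0 + x0 * y1 + x1 * y0 - x1 * y1| ≤ 2 * nx * ny := by
  have h : x0 * y0 + x0 * y1 + x1 * y0 - x1 * y1
      = (y0 + y1) * x0 + (y0 - y1) * x1 := by ring
  rw [h]
  calc |(y0 + y1) * x0 + (y0 - y1) * x1| ≤ 2 * ny * nx :=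
        comb_abs y0 y1 x0 x1 ny nx hy0 hy1 hx0 hx1
    _ = 2 * nx * ny := by ring

private def ee (a : Fin 8) (i : Fin 8) : ℤ := if a = i then 1 else 0

private def qq (i₁ i₂ : Fin 8) (a b : Fin 8) : ℤ :=
  ee a i₁ * ee a i₂ + ee a i₁ * ee b i₂ + ee b i₁ * ee a i₂ - ee b i₁ * ee b i₂

private def cc (i₁ i₂ i₃ i₄ : Fin 8) : ℤ :=
  (ee 0 i₄ + ee 1 i₄) * ((ee 0 i₃ + ee 1 i₃) * qq i₁ i₂ 0 1 + (ee 0 i₃ - ee 1 i₃) * qq i₁ i₂ 2 3)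
  + (ee 0 i₄ - ee 1 i₄) * ((ee 2 i₃ + ee 3 i₃) * qq i₁ i₂ 4 5 + (ee 2 i₃ - ee 3 i₃) * qq i₁ i₂ 6 7)

/-- For the 4-linear form `T₄` on `(ℝ⁸)⁴` (sup norm) given by
`T₄(x,y,z,w) = (w₁+w₂)[(z₁+z₂)(x₁y₁+x₁y₂+x₂y₁−x₂y₂)+(z₁−z₂)(x₃y₃+x₃y₄+x₄y₃−x₄y₄)]
 + (w₁−w₂)[(z₃+z₄)(x₅y₅+x₅y₆+x₆y₅−x₆y₆)+(z₃−z₄)(x₇y₇+x₇y₈+x₈y₇−x₈y₈)]`,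
one has `‖T₄‖ = 8` and
`∑_{i₁=1}^{8} (∑_{i₂,i₃,i₄=1}^{8} |T₄(e_{i₁},e_{i₂},e_{i₃},e_{i₄})|²)^{1/2} = 8√8`. -/
theorem T4_norm_and_sum
    (T₄ : ContinuousMultilinearMap ℝ (fun _ : Fin 4 => (Fin 8 → ℝ)) ℝ)
    (hT : ∀ x y z w : Fin 8 → ℝ,
      T₄ ![x, y, z, w] =
        (w 0 + w 1) *
          ((z 0 + z 1) * (x 0 * y 0 + x 0 * y 1 + x 1 * y 0 - x 1 * y 1)
            + (z 0 - z 1) * (x 2 * y 2 + x 2 * y 3 + x 3 * y 2 - x 3 * y 3))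
        + (w 0 - w 1) *
          ((z 2 + z 3) * (x 4 * y 4 + x 4 * y 5 + x 5 * y 4 - x 5 * y 5)
            + (z 2 - z 3) * (x 6 * y 6 + x 6 * y 7 + x 7 * y 6 - x 7 * y 7))) :
    ‖T₄‖ = 8 ∧
    ∑ i₁ : Fin 8, Real.sqrt (∑ i₂ : Fin 8, ∑ i₃ : Fin 8, ∑ i₄ : Fin 8,
        |T₄ ![Pi.single i₁ 1, Pi.single i₂ 1, Pi.single i₃ 1, Pi.single i₄ 1]| ^ 2)
      = 8 * Real.sqrt 8 := by
  constructor
  · -- the operator norm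
    have hub : ‖T₄‖ ≤ 8 := by
      apply ContinuousMultilinearMap.opNorm_le_bound (by norm_num)
      intro m
      have hm : m = ![m 0, m 1, m 2, m 3] := by
        funext i; fin_cases i <;> rfl
      set x := m 0 with hx; set y := m 1 with hy; set z := m 2 with hz; set w := m 3 with hw
      have hTm : T₄ m = (w 0 + w 1) *
            ((z 0 + z 1) * (x 0 * y 0 + x 0 * y 1 + x 1 * y 0 - x 1 * y 1)
              + (z 0 - z 1) * (x 2 * y 2 + x 2 * y 3 + x 3 * y 2 - x 3 * y 3))
          + (w 0 - w 1) *
            ((z 2 + z 3) * (x 4 * y 4 + x 4 * y 5 + x 5 * y 4 - x 5 * y 5)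
              + (z 2 - z 3) * (x 6 * y 6 + x 6 * y 7 + x 7 * y 6 - x 7 * y 7)) := by
        conv_lhs => rw [hm]
        exact hT x y z w
      have hxn : ∀ i, |x i| ≤ ‖x‖ := fun i => by
        simpa [Real.norm_eq_abs] using norm_le_pi_norm x i
      have hyn : ∀ i, |y i| ≤ ‖y‖ := fun i => by
        simpa [Real.norm_eq_abs] using norm_le_pi_norm y i
      have hzn : ∀ i, |z i| ≤ ‖z‖ := fun i => by
        simpa [Real.norm_eq_abs] using norm_le_pi_norm z i
      have hwn : ∀ i, |w i| ≤ ‖w‖ := fun i => by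
        simpa [Real.norm_eq_abs] using norm_le_pi_norm w i
      have hA := quad_abs (x 0) (x 1) (y 0) (y 1) ‖x‖ ‖y‖ (hxn 0) (hxn 1) (hyn 0) (hyn 1)
      have hB := quad_abs (x 2) (x 3) (y 2) (y 3) ‖x‖ ‖y‖ (hxn 2) (hxn 3) (hyn 2) (hyn 3)
      have hC := quad_abs (x 4) (x 5) (y 4) (y 5) ‖x‖ ‖y‖ (hxn 4) (hxn 5) (hyn 4) (hyn 5)
      have hD := quad_abs (x 6) (x 7) (y 6) (y 7) ‖x‖ ‖y‖ (hxn 6) (hxn 7) (hyn 6) (hyn 7)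
      have hP := comb_abs (z 0) (z 1) _ _ ‖z‖ (2 * ‖x‖ * ‖y‖) (hzn 0) (hzn 1) hA hB
      have hQ := comb_abs (z 2) (z 3) _ _ ‖z‖ (2 * ‖x‖ * ‖y‖) (hzn 2) (hzn 3) hC hD
      have hT' := comb_abs (w 0) (w 1) _ _ ‖w‖ (2 * ‖z‖ * (2 * ‖x‖ * ‖y‖)) (hwn 0) (hwn 1) hP hQ
      rw [hTm, Real.norm_eq_abs, Fin.prod_univ_four]
      calc |_| ≤ 2 * ‖w‖ * (2 * ‖z‖ * (2 * ‖x‖ * ‖y‖)) := hT'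
        _ = 8 * (‖x‖ * ‖y‖ * ‖z‖ * ‖w‖) := by ring
        _ = 8 * (‖m 0‖ * ‖m 1‖ * ‖m 2‖ * ‖m 3‖) := by rw [hx, hy, hz, hw]
    have hlb : (8:ℝ) ≤ ‖T₄‖ := by
      set x : Fin 8 → ℝ := fun _ => 1 with hxd
      set y : Fin 8 → ℝ := fun i => if i = 0 ∨ i = 2 ∨ i = 4 ∨ i = 6 then 1 else -1 with hyd
      set z : Fin 8 → ℝ := fun i => if i = 0 ∨ i = 2 then 1 else 0 with hzd
      set w : Fin 8 → ℝ := fun i => if i = 0 then 1 else 0 with hwd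
      have hval : T₄ ![x, y, z, w] = 8 := by
        rw [hT]; simp [hxd, hyd, hzd, hwd]; norm_num
      have hx1 : ‖x‖ ≤ 1 := by
        rw [pi_norm_le_iff_of_nonneg zero_le_one]
        intro j; simp [hxd]
      have hy1 : ‖y‖ ≤ 1 := by
        rw [pi_norm_le_iff_of_nonneg zero_le_one]
        intro j; simp only [hyd, Real.norm_eq_abs]; split <;> norm_num
      have hz1 : ‖z‖ ≤ 1 := by
        rw [pi_norm_le_iff_of_nonneg zero_le_one]
        intro j; simp only [hzd, Real.norm_eq_abs]; split <;> norm_num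
      have hw1 : ‖w‖ ≤ 1 := by
        rw [pi_norm_le_iff_of_nonneg zero_le_one]
        intro j; simp only [hwd, Real.norm_eq_abs]; split <;> norm_num
      have hprod : ∏ i, ‖(![x, y, z, w] : Fin 4 → (Fin 8 → ℝ)) i‖ ≤ 1 := by
        rw [Fin.prod_univ_four]
        show ‖x‖ * ‖y‖ * ‖z‖ * ‖w‖ ≤ 1
        calc ‖x‖ * ‖y‖ * ‖z‖ * ‖w‖ ≤ 1 * 1 * 1 * 1 := by gcongr
          _ = 1 := by norm_num
      calc (8:ℝ) = ‖T₄ ![x, y, z, w]‖ := by rw [hval]; simp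
        _ ≤ ‖T₄‖ * ∏ i, ‖(![x, y, z, w] : Fin 4 → (Fin 8 → ℝ)) i‖ := T₄.le_opNorm _
        _ ≤ ‖T₄‖ * 1 := mul_le_mul_of_nonneg_left hprod (norm_nonneg _)
        _ = ‖T₄‖ := mul_one _
    exact le_antisymm hub hlb
  · -- the sum of square roots
    have hinner : ∀ i₁ : Fin 8, (∑ i₂ : Fin 8, ∑ i₃ : Fin 8, ∑ i₄ : Fin 8,
        |T₄ ![Pi.single i₁ 1, Pi.single i₂ 1, Pi.single i₃ 1, Pi.single i₄ 1]| ^ 2)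
        = 8 := by
      have hval : ∀ i₁ i₂ i₃ i₄ : Fin 8,
          T₄ ![Pi.single i₁ 1, Pi.single i₂ 1, Pi.single i₃ 1, Pi.single i₄ 1]
            = (cc i₁ i₂ i₃ i₄ : ℝ) := by
        intro i₁ i₂ i₃ i₄
        rw [hT]
        simp only [cc, qq, ee, Pi.single_apply, apply_ite ((↑·) : ℤ → ℝ)]
        push_cast
        ring
      intro i₁
      have h2 : ∀ i₂ i₃ i₄ : Fin 8,
          |T₄ ![Pi.single i₁ 1, Pi.single i₂ 1, Pi.single i₃ 1, Pi.single i₄ 1]| ^ 2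
            = ((cc i₁ i₂ i₃ i₄ ^ 2 : ℤ) : ℝ) := by
        intro i₂ i₃ i₄; rw [hval, sq_abs]; push_cast; ring
      simp only [h2]
      rw [show (8:ℝ) = ((8:ℤ):ℝ) by norm_num]
      push_cast [← Int.cast_sum]
      norm_cast
      fin_cases i₁ <;> rw [show (8:ℝ) = ((8:ℤ):ℝ) by norm_num, Int.cast_inj] <;> decide
    calc ∑ i₁ : Fin 8, Real.sqrt (∑ i₂ : Fin 8, ∑ i₃ : Fin 8, ∑ i₄ : Fin 8,
          |T₄ ![Pi.single i₁ 1, Pi.single i₂ 1, Pi.single i₃ 1, Pi.single i₄ 1]| ^ 2)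
        = ∑ _i₁ : Fin 8, Real.sqrt 8 := by
          exact Finset.sum_congr rfl fun i₁ _ => by rw [hinner i₁]
      _ = 8 * Real.sqrt 8 := by
          rw [Finset.sum_const, Finset.card_univ]
          simp [nsmul_eq_mul]
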